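/- arXiv:1309.3026 — 2 statements merged into one kernel-verified Lean document; each statement's English description precedes it below -/
import Mathlib

section
/- Let Γ ↷ (X, μ) be a strongly ergodic p.m.p. action of a countable group on a standard probability space, let H be a Polish group, and let w : Γ × X → H be a cocycle. Assume there exists a sequence of Borel maps φ_n : X → H such that for every g ∈ Γ, μ({x ∈ X : w(g, x) = φ_n(gx)·φ_n(x)⁻¹}) → 1 as n → ∞. Then w is cohomologous to the trivial homomorphism from Γ to H: there exists a Borel map ψ : X → H such that w(g, x) = ψ(gx)·ψ(x)⁻¹ for all g ∈ Γ and almost every x ∈ X. -/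
open MeasureTheory Filter Topology Set
open scoped ENNReal symmDiff

namespace IoanaPaper

/-- A p.m.p. action is strongly ergodic if every asymptotically invariant sequence of Borel
sets is trivial: `μ(g Aₙ Δ Aₙ) → 0` for all `g` implies `μ(Aₙ)(1 - μ(Aₙ)) → 0`. -/
def StronglyErgodic {Γ X : Type*} [MeasurableSpace X] (μ : Measure X) (a : Γ → X → X) : Prop :=
  ∀ A : ℕ → Set X, (∀ n, MeasurableSet (A n)) →
    (∀ g : Γ, Tendsto (fun n => μ (symmDiff (a g '' A n) (A n))) atTop (𝓝 0)) →
    Tendsto (fun n => μ (A n) * μ (A n)ᶜ) atTop (𝓝 0)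

private lemma four_inv_lt_one : (4 : ℝ≥0∞)⁻¹ < 1 :=
  ENNReal.inv_lt_one.mpr (by norm_num)

private lemma inv4_mul : (4 : ℝ≥0∞)⁻¹ * 4 = 1 :=
  ENNReal.inv_mul_cancel (by norm_num) (by norm_num)

lemma exists_point_mass {H : Type*} [TopologicalSpace H] [T2Space H]
    [SecondCountableTopology H] [MeasurableSpace H] [BorelSpace H]
    (ν : Measure H) [IsProbabilityMeasure ν] {α : ℝ≥0∞} (hα : α ≤ 4⁻¹)
    (hdi : ∀ B : Set H, MeasurableSet B → ν B ≤ α ∨ ν Bᶜ ≤ α) :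
    ∃ c : H, ν {c}ᶜ ≤ α := by
  classical
  have h3 : ¬ ((1 : ℝ≥0∞) ≤ 3 * α) := by
    intro h
    have h2 : (3 : ℝ≥0∞) * α ≤ 3 * 4⁻¹ := by gcongr
    have h4 : (1 : ℝ≥0∞) * 4 ≤ 3 * 4⁻¹ * 4 := mul_le_mul_left (h.trans h2) 4
    rw [one_mul, mul_assoc, inv4_mul, mul_one] at h4
    norm_num at h4
  set S : Set (Set H) := {U | U ∈ TopologicalSpace.countableBasis H ∧ ν U ≤ α} with hS
  have hSsmall : ν (⋃₀ S) ≤ α := by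
    rcases S.eq_empty_or_nonempty with hne | hne
    · simp [hne]
    · obtain ⟨e, he⟩ :=
        ((TopologicalSpace.countable_countableBasis H).mono
          (fun U hU => hU.1)).exists_eq_range hne
      have heS : ∀ k, e k ∈ S := by
        intro k
        have : e k ∈ range e := mem_range_self k
        rw [← he] at this
        exact this
      have hmeas : ∀ k, MeasurableSet (e k) :=
        fun k => (TopologicalSpace.isOpen_of_mem_countableBasis (heS k).1).measurableSet
      set W : ℕ → Set H := fun j => ⋃ i ∈ Finset.range (j + 1), e i with hW
      have hWmeas : ∀ j, MeasurableSet (W j) := fun j =>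
        MeasurableSet.biUnion (Finset.range (j + 1)).countable_toSet (fun i _ => hmeas i)
      have hWsucc : ∀ j, W (j + 1) = W j ∪ e (j + 1) := by
        intro j
        rw [hW]
        simp only [Finset.range_add_one (n := j + 1)]
        rw [Finset.set_biUnion_insert, Set.union_comm]
      have hacc : ∀ j, ν (W j) ≤ α := by
        intro j
        induction j with
        | zero => simpa [hW] using (heS 0).2
        | succ j ih =>
          rcases hdi _ (hWmeas (j + 1)) with hsmall | hbig
          · exact hsmall
          · exfalso
            apply h3
            have hle : ν (W (j + 1)) ≤ α + α := by
              rw [hWsucc j]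
              exact (measure_union_le _ _).trans (add_le_add ih (heS (j + 1)).2)
            calc (1 : ℝ≥0∞) = ν univ := (measure_univ (μ := ν)).symm
              _ = ν (W (j + 1) ∪ (W (j + 1))ᶜ) := by rw [Set.union_compl_self]
              _ ≤ ν (W (j + 1)) + ν (W (j + 1))ᶜ := measure_union_le _ _
              _ ≤ (α + α) + α := add_le_add hle hbig
              _ = 3 * α := by ring
      have hWmono : Monotone W := by
        intro i j hij
        refine Set.biUnion_subset_biUnion_left ?_
        intro k hk
        have hk' : k < i + 1 := Finset.mem_range.mp hk
        exact Finset.mem_range.mpr (by omega)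
      have hUeq : ⋃₀ S = ⋃ j, W j := by
        rw [he, sUnion_range]
        ext z
        simp only [mem_iUnion, hW, Finset.mem_range]
        constructor
        · rintro ⟨i, hi⟩
          exact ⟨i, i, by omega, hi⟩
        · rintro ⟨j, i, _, hi⟩
          exact ⟨i, hi⟩
      rw [hUeq, hWmono.measure_iUnion]
      exact iSup_le hacc
  have hα1 : α < 1 := lt_of_le_of_lt hα four_inv_lt_one
  set F : Set H := (⋃₀ S)ᶜ with hF
  have hFne : F.Nonempty := by
    by_contra hF0
    rw [Set.not_nonempty_iff_eq_empty, hF, compl_empty_iff] at hF0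
    rw [hF0, measure_univ] at hSsmall
    exact absurd hSsmall (not_le.mpr hα1)
  have hFsub : F.Subsingleton := by
    intro x hx y hy
    by_contra hxy
    obtain ⟨U, V, hUo, hVo, hxU, hyV, hUV⟩ := t2_separation hxy
    obtain ⟨U', hU'b, hxU', hU'U⟩ :=
      (TopologicalSpace.isBasis_countableBasis H).exists_subset_of_mem_open hxU hUo
    obtain ⟨V', hV'b, hyV', hV'V⟩ :=
      (TopologicalSpace.isBasis_countableBasis H).exists_subset_of_mem_open hyV hVo
    have hU'o : IsOpen U' := TopologicalSpace.isOpen_of_mem_countableBasis hU'b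
    have hV'o : IsOpen V' := TopologicalSpace.isOpen_of_mem_countableBasis hV'b
    have hU'c : ν U'ᶜ ≤ α :=
      (hdi U' hU'o.measurableSet).resolve_left
        (fun hsm => hx (mem_sUnion.mpr ⟨U', ⟨hU'b, hsm⟩, hxU'⟩))
    have hV'c : ν V'ᶜ ≤ α :=
      (hdi V' hV'o.measurableSet).resolve_left
        (fun hsm => hy (mem_sUnion.mpr ⟨V', ⟨hV'b, hsm⟩, hyV'⟩))
    have h1U : (1 : ℝ≥0∞) ≤ ν U' + α := by
      calc (1 : ℝ≥0∞) = ν univ := (measure_univ (μ := ν)).symm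
        _ = ν (U' ∪ U'ᶜ) := by rw [Set.union_compl_self]
        _ ≤ ν U' + ν U'ᶜ := measure_union_le _ _
        _ ≤ ν U' + α := add_le_add_right hU'c _
    have h1V : (1 : ℝ≥0∞) ≤ ν V' + α := by
      calc (1 : ℝ≥0∞) = ν univ := (measure_univ (μ := ν)).symm
        _ = ν (V' ∪ V'ᶜ) := by rw [Set.union_compl_self]
        _ ≤ ν V' + ν V'ᶜ := measure_union_le _ _
        _ ≤ ν V' + α := add_le_add_right hV'c _
    have hdisj : Disjoint U' V' := hUV.mono hU'U hV'V
    have hsum : ν U' + ν V' ≤ 1 := by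
      rw [← measure_union hdisj hV'o.measurableSet]
      exact prob_le_one
    have hbig : (2 : ℝ≥0∞) ≤ 1 + (α + α) := by
      calc (2 : ℝ≥0∞) = 1 + 1 := by norm_num
        _ ≤ (ν U' + α) + (ν V' + α) := add_le_add h1U h1V
        _ = (ν U' + ν V') + (α + α) := by ring
        _ ≤ 1 + (α + α) := add_le_add_left hsum _
    have hbig2 : (2 : ℝ≥0∞) * 4 ≤ (1 + (4⁻¹ + 4⁻¹)) * 4 := by
      refine le_trans (mul_le_mul_left hbig 4) (mul_le_mul_left ?_ 4)
      exact add_le_add_right (add_le_add hα hα) 1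
    rw [add_mul, add_mul, one_mul, inv4_mul] at hbig2
    norm_num at hbig2
  obtain ⟨c, hc⟩ := hFne
  have hFc : F = {c} := hFsub.eq_singleton_of_mem hc
  refine ⟨c, ?_⟩
  have hcc : ({c} : Set H)ᶜ = ⋃₀ S := by
    rw [← hFc, hF, compl_compl]
  rw [hcc]
  exact hSsmall

/-- **Lemma I of [Ioana]**: let `Γ ↷ (X, μ)` be a strongly ergodic p.m.p. action of a
countable group on a standard probability space, `H` a Polish group and `w : Γ × X → H` a
cocycle. If there are Borel maps `φₙ : X → H` with
`μ({x | w(g, x) = φₙ(gx)·φₙ(x)⁻¹}) → 1` for every `g ∈ Γ`, then `w` is cohomologous to the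
trivial homomorphism: there is a Borel map `ψ : X → H` with `w(g, x) = ψ(gx)·ψ(x)⁻¹` for all
`g ∈ Γ` and a.e. `x ∈ X`. -/
theorem approx_trivial_cocycle_is_trivial
    {Γ X H : Type*} [Group Γ] [Countable Γ]
    [MeasurableSpace X] [StandardBorelSpace X]
    (μ : Measure X) [IsProbabilityMeasure μ]
    (a : Γ → X → X) (ha_one : ∀ x, a 1 x = x)
    (ha_mul : ∀ g h x, a (g * h) x = a g (a h x))
    (ha_meas : ∀ g, Measurable (a g))
    (ha_pres : ∀ g, MeasurePreserving (a g) μ μ)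
    (hse : StronglyErgodic μ a)
    [Group H] [TopologicalSpace H] [IsTopologicalGroup H] [PolishSpace H]
    [MeasurableSpace H] [BorelSpace H]
    (w : Γ → X → H) (hw_meas : ∀ g, Measurable (w g))
    (hw_cocycle : ∀ g h : Γ, ∀ᵐ x ∂μ, w (g * h) x = w g (a h x) * w h x)
    (φ : ℕ → X → H) (hφ_meas : ∀ n, Measurable (φ n))
    (hφ : ∀ g : Γ,
      Tendsto (fun n => μ {x | w g x = φ n (a g x) * (φ n x)⁻¹}) atTop (𝓝 1)) :
    ∃ ψ : X → H, Measurable ψ ∧ ∀ g : Γ, ∀ᵐ x ∂μ, w g x = ψ (a g x) * (ψ x)⁻¹ := by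
  classical
  have meas_eq : ∀ {f g : X → H}, Measurable f → Measurable g →
      MeasurableSet {x | f x = g x} := fun hf hg =>
    hf.stronglyMeasurable.measurableSet_eq_fun hg.stronglyMeasurable
  set good : Γ → ℕ → Set X := fun g n => {x | w g x = φ n (a g x) * (φ n x)⁻¹} with hgood_def
  have hgood_meas : ∀ g n, MeasurableSet (good g n) := fun g n =>
    meas_eq (hw_meas g) (((hφ_meas n).comp (ha_meas g)).mul (hφ_meas n).inv)
  have hbad : ∀ g : Γ, Tendsto (fun n => μ (good g n)ᶜ) atTop (𝓝 0) := by
    intro g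
    have h1 : Tendsto (fun n => 1 - μ (good g n)) atTop (𝓝 (1 - 1)) :=
      ENNReal.Tendsto.sub tendsto_const_nhds (hφ g) (Or.inl ENNReal.one_ne_top)
    rw [tsub_self] at h1
    exact h1.congr fun n => (prob_compl_eq_one_sub (hgood_meas g n)).symm
  -- the comparison functions
  set hfun : ℕ → ℕ → X → H := fun n m x => (φ n x)⁻¹ * φ m x with hhfun
  have hfun_meas : ∀ n m, Measurable (hfun n m) := fun n m => (hφ_meas n).inv.mul (hφ_meas m)
  have hkey : ∀ (g : Γ) (n m : ℕ) (x : X), x ∈ good g n → x ∈ good g m →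
      hfun n m (a g x) = hfun n m x := by
    intro g n m x hxn hxm
    have e1 : w g x = φ n (a g x) * (φ n x)⁻¹ := hxn
    have e2 : w g x = φ m (a g x) * (φ m x)⁻¹ := hxm
    have f1 : φ n (a g x) = w g x * φ n x := by rw [e1]; group
    have f2 : φ m (a g x) = w g x * φ m x := by rw [e2]; group
    show (φ n (a g x))⁻¹ * φ m (a g x) = (φ n x)⁻¹ * φ m x
    rw [f1, f2]; group
  -- invariance estimate
  have hinv : ∀ (g : Γ) (n m : ℕ) (B : Set H),
      μ ((a g '' (hfun n m ⁻¹' B)) ∆ (hfun n m ⁻¹' B)) ≤ μ (good g n)ᶜ + μ (good g m)ᶜ := by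
    intro g n m B
    set A : Set X := hfun n m ⁻¹' B with hA
    set s : Set X := {x | hfun n m (a g x) = hfun n m x}ᶜ with hs
    have hs_meas : MeasurableSet s :=
      (meas_eq ((hfun_meas n m).comp (ha_meas g)) (hfun_meas n m)).compl
    have hgg : ∀ y : X, a g (a g⁻¹ y) = y := by
      intro y; rw [← ha_mul, mul_inv_cancel, ha_one]
    have hgg' : ∀ y : X, a g⁻¹ (a g y) = y := by
      intro y; rw [← ha_mul, inv_mul_cancel, ha_one]
    have himg : a g '' A = a g⁻¹ ⁻¹' A := by
      ext y
      constructor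
      · rintro ⟨x, hx, rfl⟩
        show a g⁻¹ (a g x) ∈ A
        rw [hgg']; exact hx
      · intro hy
        exact ⟨a g⁻¹ y, hy, hgg y⟩
    have hsub : (a g '' A) ∆ A ⊆ a g⁻¹ ⁻¹' s := by
      rw [himg]
      intro y hy
      by_contra hns
      have heq : hfun n m (a g (a g⁻¹ y)) = hfun n m (a g⁻¹ y) := not_not.mp hns
      rw [hgg y] at heq
      have hiff : a g⁻¹ y ∈ A ↔ y ∈ A := by
        simp only [hA, Set.mem_preimage, heq]
      rcases Set.mem_symmDiff.mp hy with ⟨h1, h2⟩ | ⟨h1, h2⟩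
      · exact h2 (hiff.mp h1)
      · exact (h2 : a g⁻¹ y ∉ A) (hiff.mpr h1)
    have hssub : s ⊆ (good g n)ᶜ ∪ (good g m)ᶜ := by
      intro x hx
      by_contra hx2
      simp only [Set.mem_union, Set.mem_compl_iff, not_or, not_not] at hx2
      exact hx (hkey g n m x hx2.1 hx2.2)
    calc μ ((a g '' A) ∆ A) ≤ μ (a g⁻¹ ⁻¹' s) := measure_mono hsub
      _ = μ s := (ha_pres g⁻¹).measure_preimage hs_meas.nullMeasurableSet
      _ ≤ μ ((good g n)ᶜ ∪ (good g m)ᶜ) := measure_mono hssub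
      _ ≤ μ (good g n)ᶜ + μ (good g m)ᶜ := measure_union_le _ _
  -- Lemma A : concentration
  have lemA : ∀ ε : ℝ≥0∞, 0 < ε → ε ≤ 4⁻¹ →
      ∃ N : ℕ, ∀ n m, N ≤ n → N ≤ m → ∃ c : H, μ {x | hfun n m x = c}ᶜ ≤ ε := by
    intro ε hε0 hε4
    by_contra hcon
    push_neg at hcon
    choose nf mf hnf hmf hcf using hcon
    have hBj : ∀ j : ℕ, ∃ B : Set H, MeasurableSet B ∧
        ε < μ (hfun (nf j) (mf j) ⁻¹' B) ∧ ε < μ ((hfun (nf j) (mf j) ⁻¹' B)ᶜ) := by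
      intro j
      set ν : Measure H := Measure.map (hfun (nf j) (mf j)) μ with hν
      haveI : IsProbabilityMeasure ν :=
        Measure.isProbabilityMeasure_map (hfun_meas (nf j) (mf j)).aemeasurable
      by_contra hno
      push_neg at hno
      have hdi : ∀ B : Set H, MeasurableSet B → ν B ≤ ε ∨ ν Bᶜ ≤ ε := by
        intro B hB
        rw [hν, Measure.map_apply (hfun_meas _ _) hB,
          Measure.map_apply (hfun_meas _ _) hB.compl, Set.preimage_compl]
        rcases le_or_gt (μ (hfun (nf j) (mf j) ⁻¹' B)) ε with hle | hlt
        · exact Or.inl hle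
        · exact Or.inr (hno B hB hlt)
      obtain ⟨c, hc⟩ := exists_point_mass ν hε4 hdi
      have hceq : ν {c}ᶜ = μ {x | hfun (nf j) (mf j) x = c}ᶜ := by
        rw [hν, Measure.map_apply (hfun_meas _ _) (measurableSet_singleton c).compl,
          Set.preimage_compl]
        congr 1
      rw [hceq] at hc
      exact absurd hc (not_le.mpr (hcf j c))
    choose B hBmeas hB1 hB2 using hBj
    set A : ℕ → Set X := fun j => hfun (nf j) (mf j) ⁻¹' (B j) with hAdef
    have hAmeas : ∀ j, MeasurableSet (A j) := fun j => (hfun_meas _ _) (hBmeas j)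
    have hAinv : ∀ g : Γ, Tendsto (fun j => μ ((a g '' A j) ∆ (A j))) atTop (𝓝 0) := by
      intro g
      have hb1 : Tendsto (fun j => μ (good g (nf j))ᶜ) atTop (𝓝 0) :=
        (hbad g).comp (tendsto_atTop_mono hnf tendsto_id)
      have hb2 : Tendsto (fun j => μ (good g (mf j))ᶜ) atTop (𝓝 0) :=
        (hbad g).comp (tendsto_atTop_mono hmf tendsto_id)
      have hsum : Tendsto (fun j => μ (good g (nf j))ᶜ + μ (good g (mf j))ᶜ) atTop (𝓝 0) := by
        simpa using hb1.add hb2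
      exact tendsto_of_tendsto_of_tendsto_of_le_of_le tendsto_const_nhds hsum
        (fun j => zero_le) (fun j => hinv g (nf j) (mf j) (B j))
    have hcontra := hse A hAmeas hAinv
    have hlow : ∀ j, ε * ε ≤ μ (A j) * μ (A j)ᶜ := by
      intro j
      have m1 : μ (A j) = μ (hfun (nf j) (mf j) ⁻¹' (B j)) := rfl
      exact mul_le_mul' (hB1 j).le (hB2 j).le
    have hεε : (0 : ℝ≥0∞) < ε * ε := ENNReal.mul_pos hε0.ne' hε0.ne'
    obtain ⟨j, hj⟩ := (hcontra.eventually_lt_const hεε).exists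
    exact absurd (hlow j) (not_le.mpr hj)
  -- geometric epsilons
  have half_lt_one : (2 : ℝ≥0∞)⁻¹ < 1 := ENNReal.inv_lt_one.mpr ENNReal.one_lt_two
  set eps : ℕ → ℝ≥0∞ := fun k => (2 : ℝ≥0∞)⁻¹ ^ (k + 2) with heps
  have heps_pos : ∀ k, (0 : ℝ≥0∞) < eps k := by
    intro k
    exact ENNReal.pow_pos (ENNReal.inv_pos.mpr ENNReal.ofNat_ne_top) _
  have hinv2sq : ((2 : ℝ≥0∞))⁻¹ ^ 2 ≤ 4⁻¹ := by
    rw [pow_two, ← ENNReal.mul_inv (Or.inl (by norm_num)) (Or.inl (by norm_num))]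
    norm_num
  have heps_le : ∀ k, eps k ≤ 4⁻¹ := by
    intro k
    refine le_trans ?_ hinv2sq
    exact pow_le_pow_of_le_one (zero_le) half_lt_one.le (by omega)
  choose N hN using fun k => lemA (eps k) (heps_pos k) (heps_le k)
  -- the subsequence
  set nseq : ℕ → ℕ := fun k => Nat.rec (N 0) (fun k ih => max (ih + 1) (N (k + 1))) k with hnseq
  have hnseq_succ : ∀ k, nseq (k + 1) = max (nseq k + 1) (N (k + 1)) := fun k => rfl
  have hnseq_mono : StrictMono nseq := strictMono_nat_of_lt_succ (by
    intro k
    rw [hnseq_succ]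
    exact lt_of_lt_of_le (Nat.lt_succ_self _) (le_max_left _ _))
  have hnseq_N : ∀ k, N k ≤ nseq k := by
    intro k
    cases k with
    | zero => exact le_rfl
    | succ k => rw [hnseq_succ]; exact le_max_right _ _
  have hconc : ∀ k, ∃ c : H, μ {x | hfun (nseq k) (nseq (k + 1)) x = c}ᶜ ≤ eps k :=
    fun k => hN k _ _ (hnseq_N k) ((hnseq_N k).trans (hnseq_mono.monotone (Nat.le_succ k)))
  choose c hc using hconc
  set b : ℕ → H := fun k => Nat.rec 1 (fun k ih => (c k)⁻¹ * ih) k with hb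
  have hb_succ : ∀ k, b (k + 1) = (c k)⁻¹ * b k := fun k => rfl
  set ψs : ℕ → X → H := fun k x => φ (nseq k) x * b k with hψs
  have hψs_meas : ∀ k, Measurable (ψs k) := fun k => (hφ_meas _).mul_const _
  set G : ℕ → Set X := fun k => {x | hfun (nseq k) (nseq (k + 1)) x = c k} with hGdef
  have hG_meas : ∀ k, MeasurableSet (G k) := fun k => meas_eq (hfun_meas _ _) measurable_const
  have hstep : ∀ k x, x ∈ G k → ψs (k + 1) x = ψs k x := by
    intro k x hx
    have e1 : (φ (nseq k) x)⁻¹ * φ (nseq (k + 1)) x = c k := hx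
    have e2 : φ (nseq (k + 1)) x = φ (nseq k) x * c k := by rw [← e1]; group
    show φ (nseq (k + 1)) x * b (k + 1) = φ (nseq k) x * b k
    rw [e2, hb_succ]
    group
  -- Borel-Cantelli for the increments
  have geom_ne_top : (∑' k : ℕ, (2 : ℝ≥0∞)⁻¹ ^ k) ≠ ⊤ := by
    rw [ENNReal.tsum_geometric]
    refine (ENNReal.inv_lt_top.mpr ?_).ne
    exact tsub_pos_iff_lt.mpr half_lt_one
  have heps_le_pow : ∀ k, eps k ≤ (2 : ℝ≥0∞)⁻¹ ^ k :=
    fun k => pow_le_pow_of_le_one (zero_le) half_lt_one.le (by omega)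
  set N1 : Set X := limsup (fun k => (G k)ᶜ) atTop with hN1
  have hN1_null : μ N1 = 0 := by
    apply measure_limsup_atTop_eq_zero
    refine ne_top_of_le_ne_top geom_ne_top ?_
    exact (ENNReal.tsum_le_tsum fun k => (hc k).trans (heps_le_pow k))
  have hN1_meas : MeasurableSet N1 := by
    rw [hN1, limsup_eq_iInf_iSup_of_nat]
    simp only [iInf_eq_iInter, iSup_eq_iUnion]
    exact MeasurableSet.iInter fun n =>
      MeasurableSet.iUnion fun i => MeasurableSet.iUnion fun _ => (hG_meas i).compl
  have hstab : ∀ x, x ∉ N1 → ∃ K, ∀ k, K ≤ k → ψs k x = ψs K x := by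
    intro x hx
    rw [hN1, mem_limsup_iff_frequently_mem, Filter.not_frequently] at hx
    obtain ⟨K, hK⟩ := eventually_atTop.mp hx
    refine ⟨K, fun k hk => ?_⟩
    induction k, hk using Nat.le_induction with
    | base => rfl
    | succ k hKk ih =>
      rw [hstep k x (Set.not_notMem.mp (hK k hKk))]
      exact ih
  -- measurable choice of stabilization index
  set p : X → ℕ → Prop := fun x K => (∀ k, K ≤ k → ψs k x = ψs K x) ∨ x ∈ N1 with hp
  have hptot : ∀ x, ∃ K, p x K := by
    intro x
    by_cases hx : x ∈ N1
    · exact ⟨0, Or.inr hx⟩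
    · obtain ⟨K, hK⟩ := hstab x hx
      exact ⟨K, Or.inl hK⟩
  have hpmeas : ∀ K, MeasurableSet {x | p x K} := by
    intro K
    have hrw : {x | p x K} = (⋂ k, ⋂ _ : K ≤ k, {x | ψs k x = ψs K x}) ∪ N1 := by
      ext x
      simp only [hp, Set.mem_setOf_eq, Set.mem_union, Set.mem_iInter]
    rw [hrw]
    exact (MeasurableSet.iInter fun k => MeasurableSet.iInter fun _ =>
      meas_eq (hψs_meas k) (hψs_meas K)).union hN1_meas
  have hfidx_meas : Measurable fun x => Nat.find (hptot x) := measurable_find _ hpmeas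
  set fidx : X → ℕ := fun x => Nat.find (hptot x) with hfidx
  set ψ : X → H := fun x => ψs (fidx x) x with hψ
  have hψ_meas : Measurable ψ := by
    intro t ht
    have hrw : ψ ⁻¹' t = ⋃ K, (fidx ⁻¹' {K}) ∩ (ψs K ⁻¹' t) := by
      ext x
      simp only [Set.mem_preimage, Set.mem_iUnion, Set.mem_inter_iff, Set.mem_singleton_iff, hψ]
      constructor
      · intro hx
        exact ⟨fidx x, rfl, hx⟩
      · rintro ⟨K, hK, hx⟩
        rw [hK]
        exact hx
    rw [hrw]
    exact MeasurableSet.iUnion fun K =>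
      (hfidx_meas (measurableSet_singleton K)).inter ((hψs_meas K) ht)
  have hψ_stab : ∀ x, x ∉ N1 → ∀ k, fidx x ≤ k → ψs k x = ψ x := by
    intro x hx k hk
    rcases Nat.find_spec (hptot x) with hgood' | hbad'
    · exact hgood' k hk
    · exact absurd hbad' hx
  refine ⟨ψ, hψ_meas, ?_⟩
  intro g
  have hBadg : Tendsto (fun k => μ (good g (nseq k))ᶜ) atTop (𝓝 0) :=
    (hbad g).comp hnseq_mono.tendsto_atTop
  have hmj : ∀ j : ℕ, ∃ K, j ≤ K ∧ μ (good g (nseq K))ᶜ ≤ (2 : ℝ≥0∞)⁻¹ ^ j := by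
    intro j
    have hev : ∀ᶠ k in atTop, μ (good g (nseq k))ᶜ ≤ (2 : ℝ≥0∞)⁻¹ ^ j := by
      exact (ENNReal.tendsto_nhds_zero.mp hBadg) _
        (ENNReal.pow_pos (ENNReal.inv_pos.mpr ENNReal.ofNat_ne_top) _)
    obtain ⟨K0, hK0⟩ := eventually_atTop.mp hev
    exact ⟨max K0 j, le_max_right _ _, hK0 _ (le_max_left _ _)⟩
  choose mj hmj1 hmj2 using hmj
  set Bad : ℕ → Set X := fun j => (good g (nseq (mj j)))ᶜ with hBadDef
  set N2 : Set X := limsup Bad atTop with hN2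
  have hN2_null : μ N2 = 0 := by
    apply measure_limsup_atTop_eq_zero
    exact ne_top_of_le_ne_top geom_ne_top (ENNReal.tsum_le_tsum hmj2)
  have hpre_null : μ (a g ⁻¹' N1) = 0 := by
    rw [(ha_pres g).measure_preimage hN1_meas.nullMeasurableSet]
    exact hN1_null
  have htot_null : μ (N1 ∪ a g ⁻¹' N1 ∪ N2) = 0 :=
    measure_union_null (measure_union_null hN1_null hpre_null) hN2_null
  rw [ae_iff]
  refine measure_mono_null ?_ htot_null
  intro x hx
  by_contra hmem
  simp only [Set.mem_union, not_or] at hmem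
  obtain ⟨⟨hx1, hx2⟩, hx3⟩ := hmem
  apply hx
  rw [hN2, mem_limsup_iff_frequently_mem, Filter.not_frequently] at hx3
  obtain ⟨J, hJ⟩ := eventually_atTop.mp hx3
  set j : ℕ := max J (max (fidx x) (fidx (a g x))) with hj
  have hjJ : J ≤ j := le_max_left _ _
  have hk1 : fidx x ≤ mj j :=
    le_trans (le_trans (le_max_left _ _) (le_max_right J _)) (hmj1 j)
  have hk2 : fidx (a g x) ≤ mj j :=
    le_trans (le_trans (le_max_right _ _) (le_max_right J _)) (hmj1 j)
  have hgoodx : x ∈ good g (nseq (mj j)) := Set.not_notMem.mp (hJ j hjJ)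
  have e1 : w g x = φ (nseq (mj j)) (a g x) * (φ (nseq (mj j)) x)⁻¹ := hgoodx
  have e2 : ψs (mj j) (a g x) * (ψs (mj j) x)⁻¹
      = φ (nseq (mj j)) (a g x) * (φ (nseq (mj j)) x)⁻¹ := by
    show (φ (nseq (mj j)) (a g x) * b (mj j)) * (φ (nseq (mj j)) x * b (mj j))⁻¹
        = φ (nseq (mj j)) (a g x) * (φ (nseq (mj j)) x)⁻¹
    group
  show w g x = ψ (a g x) * (ψ x)⁻¹
  rw [e1, ← e2, hψ_stab x hx1 _ hk1, hψ_stab (a g x) hx2 _ hk2]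


end IoanaPaper
end

section
/- Let Γ ↷ (X, μ) be a strongly ergodic p.m.p. action of a countable group on a standard probability space, let H be a compact Polish group, and let w : Γ × X → H be a cocycle. Assume there exists a sequence of Borel maps φ_n : X → H such that for every g ∈ Γ and almost every x ∈ X, φ_n(gx)·φ_n(x)⁻¹ → w(g, x) as n → ∞. Then w is cohomologous to the trivial homomorphism from Γ to H: there exists a Borel map ψ : X → H such that w(g, x) = ψ(gx)·ψ(x)⁻¹ for all g ∈ Γ and almost every x ∈ X. -/
open MeasureTheory Filter Topology Set
open scoped ENNReal

namespace IoanaPaper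

/-- **Lemma J of [Ioana] (after Schmidt)**: let `Γ ↷ (X, μ)` be a strongly ergodic p.m.p.
action of a countable group on a standard probability space, `H` a compact Polish group and
`w : Γ × X → H` a cocycle. If there are Borel maps `φₙ : X → H` with
`φₙ(gx)·φₙ(x)⁻¹ → w(g, x)` for every `g ∈ Γ` and a.e. `x ∈ X`, then `w` is cohomologous to
the trivial homomorphism: there is a Borel map `ψ : X → H` with `w(g, x) = ψ(gx)·ψ(x)⁻¹`
for all `g ∈ Γ` and a.e. `x ∈ X`. -/
theorem pointwise_approx_trivial_cocycle_is_trivial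
    {Γ X H : Type*} [Group Γ] [Countable Γ]
    [MeasurableSpace X] [StandardBorelSpace X]
    (μ : Measure X) [IsProbabilityMeasure μ]
    (a : Γ → X → X) (ha_one : ∀ x, a 1 x = x)
    (ha_mul : ∀ g h x, a (g * h) x = a g (a h x))
    (ha_meas : ∀ g, Measurable (a g))
    (ha_pres : ∀ g, MeasurePreserving (a g) μ μ)
    (hse : StronglyErgodic μ a)
    [Group H] [TopologicalSpace H] [IsTopologicalGroup H] [PolishSpace H] [CompactSpace H]
    [MeasurableSpace H] [BorelSpace H]
    (w : Γ → X → H) (hw_meas : ∀ g, Measurable (w g))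
    (hw_cocycle : ∀ g h : Γ, ∀ᵐ x ∂μ, w (g * h) x = w g (a h x) * w h x)
    (φ : ℕ → X → H) (hφ_meas : ∀ n, Measurable (φ n))
    (hφ : ∀ g : Γ, ∀ᵐ x ∂μ,
      Tendsto (fun n => φ n (a g x) * (φ n x)⁻¹) atTop (𝓝 (w g x))) :
    ∃ ψ : X → H, Measurable ψ ∧ ∀ g : Γ, ∀ᵐ x ∂μ, w g x = ψ (a g x) * (ψ x)⁻¹ := by
  letI := TopologicalSpace.upgradeIsCompletelyMetrizable H
  -- uniform continuity of two-sided multiplication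
  have key : ∀ ε : ℝ, 0 < ε → ∃ δ : ℝ, 0 < δ ∧
      ∀ a b p q : H, dist p q < δ → dist (a * p * b) (a * q * b) < ε := by
    intro ε hε
    have h1 : UniformContinuous (fun p : H × H × H => p.1 * p.2.1 * p.2.2) :=
      CompactSpace.uniformContinuous_of_continuous
        ((continuous_fst.mul continuous_snd.fst).mul continuous_snd.snd)
    rw [Metric.uniformContinuous_iff] at h1
    obtain ⟨δ, hδ0, hδ⟩ := h1 ε hε
    refine ⟨δ, hδ0, fun a b p q h => ?_⟩
    have hdd : dist ((a, p, b) : H × H × H) ((a, q, b) : H × H × H) = dist p q := by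
      simp [Prod.dist_eq, dist_self, max_eq_right dist_nonneg, max_eq_left dist_nonneg]
    have := hδ (a := ((a, p, b) : H × H × H)) (b := ((a, q, b) : H × H × H)) (by rw [hdd]; exact h)
    simpa using this
  -- image of a set equals preimage under the inverse element
  have himg : ∀ (g : Γ) (A : Set X), a g '' A = a g⁻¹ ⁻¹' A := by
    intro g A
    ext x
    constructor
    · rintro ⟨y, hy, rfl⟩
      have : a g⁻¹ (a g y) = y := by rw [← ha_mul]; simp [ha_one]
      simpa [Set.mem_preimage, this] using hy
    · intro hx
      refine ⟨a g⁻¹ x, hx, ?_⟩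
      rw [← ha_mul]; simp [ha_one]
  -- measure of symmetric difference via preimage
  have hsd : ∀ (g : Γ) (A : Set X), MeasurableSet A →
      μ (symmDiff (a g '' A) A) = μ (symmDiff A (a g ⁻¹' A)) := by
    intro g A hA
    rw [himg]
    have hpre : μ ((a g) ⁻¹' (symmDiff (a g⁻¹ ⁻¹' A) A)) = μ (symmDiff (a g⁻¹ ⁻¹' A) A) :=
      (ha_pres g).measure_preimage
        (((ha_meas g⁻¹ hA).symmDiff hA).nullMeasurableSet)
    rw [← hpre]
    have hset : (a g) ⁻¹' (symmDiff (a g⁻¹ ⁻¹' A) A) = symmDiff A (a g ⁻¹' A) := by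
      ext x
      have hinv : a g⁻¹ (a g x) = x := by rw [← ha_mul]; simp [ha_one]
      simp only [Set.mem_preimage, Set.mem_symmDiff, hinv]
    rw [hset]
  -- STEP 2 : Cauchy in measure modulo constants
  have step2 : ∀ ε : ℝ, 0 < ε → ∃ N : ℕ, ∀ m n : ℕ, N ≤ m → N ≤ n → ∃ c : H,
      μ {x | ε ≤ dist ((φ n x)⁻¹ * φ m x) c} ≤ ENNReal.ofReal ε := by
    intro ε hε
    by_contra hcon
    push_neg at hcon
    choose m n hm hn hbig using hcon
    set θ : ℕ → X → H := fun k x => (φ (n k) x)⁻¹ * φ (m k) x with hθdef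
    have hθmeas : ∀ k, Measurable (θ k) := fun k => (hφ_meas (n k)).inv.mul (hφ_meas (m k))
    -- Claim 1 : asymptotic invariance of θ, pointwise a.e.
    have claim1 : ∀ g : Γ, ∀ᵐ x ∂μ,
        Tendsto (fun k => dist (θ k (a g x)) (θ k x)) atTop (𝓝 0) := by
      intro g
      filter_upwards [hφ g] with x hx
      have hnn : Tendsto n atTop atTop := tendsto_atTop_mono hn tendsto_id
      have hmm : Tendsto m atTop atTop := tendsto_atTop_mono hm tendsto_id
      have hv : Tendsto (fun k => φ (n k) (a g x) * (φ (n k) x)⁻¹) atTop (𝓝 (w g x)) :=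
        hx.comp hnn
      have hu : Tendsto (fun k => φ (m k) (a g x) * (φ (m k) x)⁻¹) atTop (𝓝 (w g x)) :=
        hx.comp hmm
      have hp1 : Tendsto
          (fun k => (φ (n k) (a g x) * (φ (n k) x)⁻¹)⁻¹ * (φ (m k) (a g x) * (φ (m k) x)⁻¹))
          atTop (𝓝 1) := by
        simpa using hv.inv.mul hu
      rw [Metric.tendsto_atTop]
      intro ε' hε'
      obtain ⟨δ, hδ0, hδ⟩ := key ε' hε'
      obtain ⟨N, hN⟩ := Metric.tendsto_atTop.1 hp1 δ hδ0
      refine ⟨N, fun k hk => ?_⟩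
      have hrw : θ k (a g x) = (φ (n k) x)⁻¹ *
          ((φ (n k) (a g x) * (φ (n k) x)⁻¹)⁻¹ * (φ (m k) (a g x) * (φ (m k) x)⁻¹)) *
          (φ (m k) x) := by
        simp only [hθdef]; group
      have hrw2 : θ k x = (φ (n k) x)⁻¹ * 1 * (φ (m k) x) := by
        simp only [hθdef]; group
      rw [Real.dist_eq, sub_zero, abs_dist, hrw, hrw2]
      exact hδ _ _ _ _ (hN k hk)
    -- Claim 1 in measure
    have claim1m : ∀ g : Γ, ∀ η : ℝ, 0 < η →
        Tendsto (fun k => μ {x | η ≤ dist (θ k (a g x)) (θ k x)}) atTop (𝓝 0) := by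
      intro g η hη
      have haes : ∀ k, AEStronglyMeasurable (fun x => dist (θ k (a g x)) (θ k x)) μ :=
        fun k => (((hθmeas k).comp (ha_meas g)).dist (hθmeas k)).aestronglyMeasurable
      have h := tendstoInMeasure_of_tendsto_ae (g := fun _ => (0 : ℝ)) haes (claim1 g)
      have h2 := h (ENNReal.ofReal η) (ENNReal.ofReal_pos.2 hη)
      simpa only [edist_dist, Real.dist_eq, sub_zero, abs_dist,
        ENNReal.ofReal_le_ofReal_iff dist_nonneg] using h2
    -- finite cover of H by ε/4-balls
    obtain ⟨s, hs⟩ := isCompact_univ.elim_finite_subcover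
      (fun c : H => Metric.ball c (ε / 4)) (fun c => Metric.isOpen_ball)
      (fun x _ => Set.mem_iUnion.2 ⟨x, Metric.mem_ball_self (by positivity)⟩)
    have hsne : s.Nonempty := by
      rcases Finset.eq_empty_or_nonempty s with rfl | h
      · exfalso
        have := hs (Set.mem_univ (1 : H))
        simpa using this
      · exact h
    have hcard0 : (s.card : ℝ≥0∞) ≠ 0 :=
      Nat.cast_ne_zero.2 (Finset.card_ne_zero.2 hsne)
    have hcardtop : (s.card : ℝ≥0∞) ≠ ⊤ := ENNReal.natCast_ne_top _
    set R : ℝ≥0∞ := (s.card : ℝ≥0∞)⁻¹ with hRdef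
    -- pigeonhole : some ball has mass ≥ 1/card
    have hpig : ∀ k, ∃ c ∈ s, R ≤ μ (θ k ⁻¹' Metric.ball c (ε / 4)) := by
      intro k
      set b : ℝ≥0∞ := s.sup (fun c => μ (θ k ⁻¹' Metric.ball c (ε / 4))) with hbdef
      have h1 : (1 : ℝ≥0∞) ≤ (s.card : ℝ≥0∞) * b := by
        have hcov : μ (Set.univ : Set X) ≤ ∑ c ∈ s, μ (θ k ⁻¹' Metric.ball c (ε / 4)) := by
          refine le_trans (measure_mono ?_) (measure_biUnion_finset_le s _)
          intro x _
          have := hs (Set.mem_univ (θ k x))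
          simp only [Set.mem_iUnion] at this
          obtain ⟨c, hc, hxc⟩ := this
          exact Set.mem_iUnion₂.2 ⟨c, hc, hxc⟩
        have hsum : ∑ c ∈ s, μ (θ k ⁻¹' Metric.ball c (ε / 4)) ≤ (s.card : ℝ≥0∞) * b := by
          calc ∑ c ∈ s, μ (θ k ⁻¹' Metric.ball c (ε / 4)) ≤ ∑ _c ∈ s, b :=
                Finset.sum_le_sum (fun c hc => by rw [hbdef]; exact Finset.le_sup (f := fun c => μ (θ k ⁻¹' Metric.ball c (ε / 4))) hc)
            _ = (s.card : ℝ≥0∞) * b := by rw [Finset.sum_const, nsmul_eq_mul]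
        calc (1 : ℝ≥0∞) = μ Set.univ := measure_univ.symm
          _ ≤ _ := le_trans hcov hsum
      have hble : R ≤ b := by
        calc R = (s.card : ℝ≥0∞)⁻¹ * 1 := (mul_one _).symm
          _ ≤ (s.card : ℝ≥0∞)⁻¹ * ((s.card : ℝ≥0∞) * b) := by
              exact mul_le_mul_right h1 _
          _ = ((s.card : ℝ≥0∞)⁻¹ * (s.card : ℝ≥0∞)) * b := (mul_assoc _ _ _).symm
          _ = b := by rw [ENNReal.inv_mul_cancel hcard0 hcardtop, one_mul]
      obtain ⟨c, hc, hceq⟩ := Finset.exists_mem_eq_sup s hsne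
        (fun c => μ (θ k ⁻¹' Metric.ball c (ε / 4)))
      exact ⟨c, hc, by rw [← hceq]; exact hble⟩
    choose cc hccs hccm using hpig
    -- constant center along an infinite set
    have hfiber : ∃ c₀ : H, {k : ℕ | cc k = c₀}.Infinite := by
      obtain ⟨y, hy⟩ := Finite.exists_infinite_fiber (fun k => (⟨cc k, hccs k⟩ : {c // c ∈ s}))
      refine ⟨(y : H), ?_⟩
      have h1 : ((fun k => (⟨cc k, hccs k⟩ : {c // c ∈ s})) ⁻¹' {y}).Infinite :=
        Set.infinite_coe_iff.1 hy
      refine h1.mono ?_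
      intro k hk
      simp only [Set.mem_preimage, Set.mem_singleton_iff] at hk
      simpa [Set.mem_setOf_eq] using congrArg Subtype.val hk
    obtain ⟨c₀, hc₀⟩ := hfiber
    set τ : ℕ → ℕ := Nat.nth (fun k => cc k = c₀) with hτdef
    have hτmono : StrictMono τ := Nat.nth_strictMono hc₀
    have hτc : ∀ j, cc (τ j) = c₀ := fun j => Nat.nth_mem_of_infinite hc₀ j
    -- distribution functions and a convergent subsequence
    set G : ℕ → ℚ → ℝ := fun j q => (μ {x | dist (θ (τ j) x) c₀ < (q : ℝ)}).toReal with hGdef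
    have hGmem : ∀ j, G j ∈ {f : ℚ → ℝ | ∀ q, f q ∈ Set.Icc (0 : ℝ) 1} := by
      intro j q
      refine ⟨ENNReal.toReal_nonneg, ?_⟩
      rw [← ENNReal.toReal_one]
      exact ENNReal.toReal_mono ENNReal.one_ne_top prob_le_one
    obtain ⟨L, hLmem, π, hπmono, hπtend⟩ :=
      (isCompact_pi_infinite (fun q : ℚ => isCompact_Icc)).tendsto_subseq hGmem
    have hLtend : ∀ q : ℚ, Tendsto (fun j => G (π j) q) atTop (𝓝 (L q)) := by
      intro q
      exact (tendsto_pi_nhds.1 hπtend) q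
    -- the monotone envelope and a continuity point in (ε/4, ε)
    set M : ℝ → ℝ := fun t => sSup ((fun q : ℚ => L q) '' {q : ℚ | (q : ℝ) < t}) with hMdef
    have hbdd : ∀ t : ℝ, BddAbove ((fun q : ℚ => L q) '' {q : ℚ | (q : ℝ) < t}) := by
      intro t
      refine ⟨1, ?_⟩
      rintro y ⟨q, _, rfl⟩
      exact (hLmem q).2
    have hne : ∀ t : ℝ, ((fun q : ℚ => L q) '' {q : ℚ | (q : ℝ) < t}).Nonempty := by
      intro t
      obtain ⟨q, hq⟩ := exists_rat_lt t
      exact ⟨L q, ⟨q, hq, rfl⟩⟩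
    have hMmono : Monotone M := by
      intro t t' htt
      exact csSup_le_csSup (hbdd t') (hne t)
        (Set.image_mono (fun q hq => lt_of_lt_of_le hq htt))
    obtain ⟨ρ, hρI, hρc⟩ : ∃ ρ, ρ ∈ Set.Ioo (ε / 4) ε ∧ ContinuousAt M ρ := by
      by_contra hcontra
      push_neg at hcontra
      have hsub : Set.Ioo (ε / 4) ε ⊆ {x | ¬ContinuousAt M x} := by
        intro x hx
        exact hcontra x hx
      have h1 : (volume : Measure ℝ) (Set.Ioo (ε / 4) ε) = 0 :=
        measure_mono_null hsub (hMmono.countable_not_continuousAt.measure_zero _)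
      rw [Real.volume_Ioo, ENNReal.ofReal_eq_zero] at h1
      linarith
    -- key consequence of continuity
    have hkey : ∀ ε' : ℝ, 0 < ε' → ∃ q₁ q₂ : ℚ, (q₁ : ℝ) < ρ ∧ ρ < (q₂ : ℝ) ∧
        L q₂ - L q₁ < ε' := by
      intro ε' hε'
      rw [Metric.continuousAt_iff] at hρc
      obtain ⟨δ, hδ0, hδ⟩ := hρc (ε' / 4) (by positivity)
      obtain ⟨q₂, hq₂a, hq₂b⟩ := exists_rat_btwn (show ρ < ρ + δ / 2 by linarith)
      have h2 : L q₂ ≤ M (ρ + 3 * δ / 4) := by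
        refine le_csSup (hbdd _) ⟨q₂, ?_, rfl⟩
        simp only [Set.mem_setOf_eq]
        linarith
      have hd2 : dist (ρ + 3 * δ / 4) ρ < δ := by
        rw [Real.dist_eq]
        rw [abs_of_nonneg (by linarith)]
        linarith
      have h2' : M (ρ + 3 * δ / 4) < M ρ + ε' / 4 := by
        have := hδ hd2
        rw [Real.dist_eq] at this
        have := abs_sub_lt_iff.1 this
        linarith [this.1]
      have hd1 : dist (ρ - δ / 2) ρ < δ := by
        rw [Real.dist_eq, abs_of_nonpos (by linarith)]
        linarith
      have h1' : M ρ - ε' / 4 < M (ρ - δ / 2) := by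
        have := hδ hd1
        rw [Real.dist_eq] at this
        have := abs_sub_lt_iff.1 this
        linarith [this.2]
      obtain ⟨y, hymem, hy⟩ := exists_lt_of_lt_csSup (hne (ρ - δ / 2))
        (show M (ρ - δ / 2) - ε' / 4 < M (ρ - δ / 2) by linarith)
      obtain ⟨q₁, hq₁, rfl⟩ := hymem
      simp only [Set.mem_setOf_eq] at hq₁
      refine ⟨q₁, q₂, by linarith, hq₂a, ?_⟩
      have hMq1 : M (ρ - δ / 2) ≤ M ρ := hMmono (by linarith)
      linarith
    -- the asymptotically invariant sets
    set A : ℕ → Set X := fun j => {x | dist (θ (τ (π j)) x) c₀ < ρ} with hAdef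
    have hAmeas : ∀ j, MeasurableSet (A j) :=
      fun j => measurableSet_lt ((hθmeas _).dist measurable_const) measurable_const
    have hκatTop : Tendsto (fun j => τ (π j)) atTop atTop :=
      (hτmono.comp hπmono).tendsto_atTop
    have hAinv : ∀ g : Γ, Tendsto (fun j => μ (symmDiff (a g '' A j) (A j))) atTop (𝓝 0) := by
      intro g
      rw [ENNReal.tendsto_nhds_zero]
      intro ε'' hε''
      set r : ℝ≥0∞ := min ε'' 1 with hrdef
      have hr0 : 0 < r := lt_min hε'' zero_lt_one
      have hrtop : r ≠ ⊤ := ne_top_of_le_ne_top ENNReal.one_ne_top (min_le_right _ _)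
      set e : ℝ := r.toReal / 2 with hedef
      have he : 0 < e := by
        have := ENNReal.toReal_pos hr0.ne' hrtop
        positivity
      have hsum2 : ENNReal.ofReal e + ENNReal.ofReal e ≤ ε'' := by
        rw [← ENNReal.ofReal_add he.le he.le]
        have : e + e = r.toReal := by rw [hedef]; ring
        rw [this, ENNReal.ofReal_toReal hrtop]
        exact min_le_left _ _
      obtain ⟨q₁, q₂, hq₁, hq₂, hLq⟩ := hkey e he
      set η : ℝ := min (ρ - (q₁ : ℝ)) ((q₂ : ℝ) - ρ) with hηdef
      have hη0 : 0 < η := lt_min (by linarith) (by linarith)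
      -- first event : pair distances small
      have hA1 : ∀ᶠ j in atTop,
          μ {x | η ≤ dist (θ (τ (π j)) (a g x)) (θ (τ (π j)) x)} ≤ ENNReal.ofReal e := by
        have h := (claim1m g η hη0).comp hκatTop
        have := h.eventually_lt_const (ENNReal.ofReal_pos.2 he)
        filter_upwards [this] with j hj using hj.le
      -- second event : annulus small
      have hA2 : ∀ᶠ j in atTop,
          μ {x | (q₁ : ℝ) ≤ dist (θ (τ (π j)) x) c₀ ∧ dist (θ (τ (π j)) x) c₀ < (q₂ : ℝ)}
            ≤ ENNReal.ofReal e := by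
        have htr : Tendsto (fun j => G (π j) q₂ - G (π j) q₁) atTop (𝓝 (L q₂ - L q₁)) :=
          (hLtend q₂).sub (hLtend q₁)
        have hev := htr.eventually_lt_const hLq
        filter_upwards [hev] with j hj
        set mid : Set X :=
          {x | (q₁ : ℝ) ≤ dist (θ (τ (π j)) x) c₀ ∧ dist (θ (τ (π j)) x) c₀ < (q₂ : ℝ)}
          with hmiddef
        have hmidmeas : MeasurableSet mid :=
          (measurableSet_le measurable_const ((hθmeas _).dist measurable_const)).inter
            (measurableSet_lt ((hθmeas _).dist measurable_const) measurable_const)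
        have hsplit : {x | dist (θ (τ (π j)) x) c₀ < (q₂ : ℝ)} =
            {x | dist (θ (τ (π j)) x) c₀ < (q₁ : ℝ)} ∪ mid := by
          ext x
          simp only [Set.mem_setOf_eq, Set.mem_union, hmiddef]
          constructor
          · intro h
            by_cases h1 : dist (θ (τ (π j)) x) c₀ < (q₁ : ℝ)
            · exact Or.inl h1
            · exact Or.inr ⟨not_lt.1 h1, h⟩
          · rintro (h | ⟨_, h⟩)
            · exact lt_trans h (by linarith)
            · exact h
        have hdisj : Disjoint {x | dist (θ (τ (π j)) x) c₀ < (q₁ : ℝ)} mid := by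
          rw [Set.disjoint_left]
          rintro x h1 ⟨h2, _⟩
          exact absurd h1 (not_lt.2 h2)
        have hμadd : μ {x | dist (θ (τ (π j)) x) c₀ < (q₂ : ℝ)} =
            μ {x | dist (θ (τ (π j)) x) c₀ < (q₁ : ℝ)} + μ mid := by
          rw [hsplit, measure_union hdisj hmidmeas]
        have hid : (μ mid).toReal = G (π j) q₂ - G (π j) q₁ := by
          have h1 : G (π j) q₂ = G (π j) q₁ + (μ mid).toReal := by
            rw [hGdef]
            simp only
            rw [hμadd, ENNReal.toReal_add (measure_ne_top μ _) (measure_ne_top μ _)]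
          linarith
        have : μ mid = ENNReal.ofReal ((μ mid).toReal) :=
          (ENNReal.ofReal_toReal (measure_ne_top μ _)).symm
        rw [this]
        apply ENNReal.ofReal_le_ofReal
        rw [hid]
        exact (lt_of_eq_of_lt rfl hj).le
      filter_upwards [hA1, hA2] with j h1 h2
      rw [hsd g (A j) (hAmeas j)]
      have hincl : symmDiff (A j) (a g ⁻¹' A j) ⊆
          {x | η ≤ dist (θ (τ (π j)) (a g x)) (θ (τ (π j)) x)} ∪
          {x | (q₁ : ℝ) ≤ dist (θ (τ (π j)) x) c₀ ∧ dist (θ (τ (π j)) x) c₀ < (q₂ : ℝ)} := by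
        intro x hx
        rw [Set.mem_symmDiff] at hx
        by_cases hd : η ≤ dist (θ (τ (π j)) (a g x)) (θ (τ (π j)) x)
        · exact Or.inl hd
        · push_neg at hd
          right
          have habs := abs_dist_sub_le (θ (τ (π j)) (a g x)) (θ (τ (π j)) x) c₀
          have habs2 := abs_sub_lt_iff.1 (lt_of_le_of_lt habs hd)
          have hη1 : η ≤ ρ - (q₁ : ℝ) := min_le_left _ _
          have hη2 : η ≤ (q₂ : ℝ) - ρ := min_le_right _ _
          rcases hx with ⟨hxA, hxB⟩ | ⟨hxB, hxA⟩
          · simp only [hAdef, Set.mem_setOf_eq, Set.mem_preimage, not_lt] at hxA hxB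
            simp only [Set.mem_setOf_eq]
            exact ⟨by linarith [habs2.1], by linarith⟩
          · simp only [hAdef, Set.mem_setOf_eq, Set.mem_preimage, not_lt] at hxA hxB
            simp only [Set.mem_setOf_eq]
            exact ⟨by linarith, by linarith [habs2.2]⟩
      calc μ (symmDiff (A j) (a g ⁻¹' A j)) ≤
          μ ({x | η ≤ dist (θ (τ (π j)) (a g x)) (θ (τ (π j)) x)} ∪
            {x | (q₁ : ℝ) ≤ dist (θ (τ (π j)) x) c₀ ∧ dist (θ (τ (π j)) x) c₀ < (q₂ : ℝ)}) :=
            measure_mono hincl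
        _ ≤ _ := measure_union_le _ _
        _ ≤ ENNReal.ofReal e + ENNReal.ofReal e := add_le_add h1 h2
        _ ≤ ε'' := hsum2
    -- strong ergodicity gives the contradiction
    have hconc := hse A hAmeas hAinv
    have hβ : ∀ j, R * ENNReal.ofReal ε ≤ μ (A j) * μ (A j)ᶜ := by
      intro j
      have h1 : R ≤ μ (A j) := by
        have hμball := hccm (τ (π j))
        rw [hτc (π j)] at hμball
        refine le_trans hμball (measure_mono ?_)
        intro x hx
        simp only [Set.mem_preimage, Metric.mem_ball] at hx
        simp only [hAdef, Set.mem_setOf_eq]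
        exact lt_trans hx hρI.1
      have h2 : ENNReal.ofReal ε ≤ μ (A j)ᶜ := by
        refine le_trans (hbig (τ (π j)) c₀).le (measure_mono ?_)
        intro x hx
        simp only [Set.mem_setOf_eq] at hx
        simp only [hAdef, Set.mem_compl_iff, Set.mem_setOf_eq, not_lt]
        exact le_trans hρI.2.le hx
      exact mul_le_mul' h1 h2
    have hβ0 : 0 < R * ENNReal.ofReal ε :=
      ENNReal.mul_pos (by simp [hRdef, hcardtop]) (ENNReal.ofReal_pos.2 hε).ne'
    obtain ⟨j, hj⟩ := (hconc.eventually_lt_const hβ0).exists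
    exact absurd (hβ j) (not_le.2 hj)
  -- STEP 3 : assemble ψ
  have hδch : ∀ k : ℕ, ∃ δ : ℝ, 0 < δ ∧ δ ≤ (1 / 2) ^ k ∧
      ∀ a b p q : H, dist p q < δ → dist (a * p * b) (a * q * b) < (1 / 2) ^ k := by
    intro k
    obtain ⟨δ, hδ0, hδ⟩ := key ((1 / 2) ^ k) (by positivity)
    exact ⟨min δ ((1 / 2) ^ k), by positivity, min_le_right _ _,
      fun a b p q h => hδ _ _ _ _ (lt_of_lt_of_le h (min_le_left _ _))⟩
  choose δ hδ0 hδle hδ using hδch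
  choose N hN using fun k => step2 (δ k) (hδ0 k)
  set ν : ℕ → ℕ := fun k => (Finset.range (k + 1)).sup N + k with hνdef
  have hν1 : ∀ k, N k ≤ ν k := fun k =>
    le_trans (Finset.le_sup (Finset.self_mem_range_succ k)) (Nat.le_add_right _ _)
  have hν2 : ∀ k, N k ≤ ν (k + 1) := fun k =>
    le_trans (Finset.le_sup (Finset.mem_range.2 (by omega))) (Nat.le_add_right _ _)
  have hνatTop : Tendsto ν atTop atTop :=
    tendsto_atTop_mono (fun k => by simp only [hνdef, id_eq]; omega) tendsto_id
  have hc : ∀ k, ∃ c : H,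
      μ {x | δ k ≤ dist ((φ (ν k) x)⁻¹ * φ (ν (k + 1)) x) c} ≤ ENNReal.ofReal (δ k) :=
    fun k => hN k (ν (k + 1)) (ν k) (hν2 k) (hν1 k)
  choose c hcμ using hc
  -- the correcting constants
  set e : ℕ → H := fun k => Nat.rec 1 (fun j ej => (c j)⁻¹ * ej) k with hedef
  have he_succ : ∀ k, e (k + 1) = (c k)⁻¹ * e k := fun k => rfl
  set ψs : ℕ → X → H := fun k x => φ (ν k) x * e k with hψsdef
  have hψsmeas : ∀ k, Measurable (ψs k) := fun k => (hφ_meas (ν k)).mul_const (e k)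
  set E : ℕ → Set X := fun k => {x | δ k ≤ dist ((φ (ν k) x)⁻¹ * φ (ν (k + 1)) x) (c k)}
    with hEdef
  have hEsum : ∑' k, μ (E k) ≠ ⊤ := by
    have hle : ∑' k, μ (E k) ≤ ∑' k : ℕ, (ENNReal.ofReal (1 / 2)) ^ k := by
      refine ENNReal.tsum_le_tsum (fun k => le_trans (hcμ k) ?_)
      rw [← ENNReal.ofReal_pow (by norm_num)]
      exact ENNReal.ofReal_le_ofReal (hδle k)
    rw [ENNReal.tsum_geometric] at hle
    refine ne_top_of_le_ne_top ?_ hle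
    have h12 : ENNReal.ofReal (1 / 2) = 2⁻¹ := by
      rw [show (1 / 2 : ℝ) = (2 : ℝ)⁻¹ by norm_num,
        ENNReal.ofReal_inv_of_pos (by norm_num)]
      norm_num
    rw [h12, ENNReal.one_sub_inv_two, inv_inv]
    exact ENNReal.ofNat_ne_top
  have hBC : ∀ᵐ x ∂μ, ∀ᶠ k in atTop, x ∉ E k := ae_eventually_notMem hEsum
  -- a.e. convergence of the corrected sequence
  have hψCauchy : ∀ᵐ x ∂μ, ∃ l : H, Tendsto (fun k => ψs k x) atTop (𝓝 l) := by
    filter_upwards [hBC] with x hx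
    obtain ⟨K, hK⟩ := eventually_atTop.1 hx
    have hd : ∀ k, K ≤ k → dist (ψs k x) (ψs (k + 1) x) ≤ (1 / 2) ^ k := by
      intro k hk
      have hxE := hK k hk
      simp only [hEdef, Set.mem_setOf_eq, not_le] at hxE
      have hb := hδ k (φ (ν k) x) (e (k + 1)) _ _ hxE
      have h1 : φ (ν k) x * ((φ (ν k) x)⁻¹ * φ (ν (k + 1)) x) * e (k + 1) = ψs (k + 1) x := by
        simp only [hψsdef]; group
      have h2 : φ (ν k) x * c k * e (k + 1) = ψs k x := by
        simp only [hψsdef, he_succ]; group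
      rw [h1, h2] at hb
      rw [dist_comm]
      exact hb.le
    have hsummable : Summable (fun k => dist (ψs k x) (ψs (k + 1) x)) := by
      rw [← summable_nat_add_iff K]
      refine Summable.of_nonneg_of_le (fun n => dist_nonneg)
        (fun n => hd (n + K) (Nat.le_add_left K n)) ?_
      exact (summable_nat_add_iff K).2 summable_geometric_two
    exact cauchySeq_tendsto_of_complete
      (cauchySeq_of_dist_le_of_summable _ (fun n => le_rfl) hsummable)
  obtain ⟨ψ, hψm, hψtend⟩ := measurable_limit_of_tendsto_metrizable_ae
    (fun k => (hψsmeas k).aemeasurable) hψCauchy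
  refine ⟨ψ, hψm, fun g => ?_⟩
  have hg1 : ∀ᵐ x ∂μ, Tendsto (fun k => ψs k (a g x)) atTop (𝓝 (ψ (a g x))) :=
    (ha_pres g).quasiMeasurePreserving.ae hψtend
  filter_upwards [hφ g, hψtend, hg1] with x hx1 hx2 hx3
  have h1 : Tendsto (fun k => ψs k (a g x) * (ψs k x)⁻¹) atTop
      (𝓝 (ψ (a g x) * (ψ x)⁻¹)) := hx3.mul hx2.inv
  have h2 : (fun k => ψs k (a g x) * (ψs k x)⁻¹) =
      fun k => φ (ν k) (a g x) * (φ (ν k) x)⁻¹ := by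
    funext k
    simp only [hψsdef]
    group
  rw [h2] at h1
  have h3 : Tendsto (fun k => φ (ν k) (a g x) * (φ (ν k) x)⁻¹) atTop (𝓝 (w g x)) :=
    hx1.comp hνatTop
  exact tendsto_nhds_unique h3 h1

end IoanaPaper
end
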